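/- Let n ≥ 1 and set L = ⌊log₂ n⌋ + 1 (so 2^{L−1} ≤ n < 2^L). Let T be the set of binary cyclic sequences s of length 2^L satisfying (E + 1)^{n+1} s = 0 and (E + 1)^n s ≠ 0. Then: every s ∈ T has linear complexity n + 1 and least period exactly 2^L (no positive p < 2^L satisfies s(i + p) = s(i) for all i); T has exactly 2^n elements, which fall into exactly 2^{n − ⌊log₂ n⌋ − 1} equivalence classes under cyclic shift, each class of size 2^L; and for every n-tuple x : Fin n → ZMod 2 there is exactly one s ∈ T with s(i) = x(i) for all 0 ≤ i < n (indices taken in ZMod 2^L), so each n-tuple is contained exactly once as a window among these sequences. -/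

import Mathlib

/-- The operator `E + 1` on binary cyclic sequences of length `N`:
`((E + 1) s)(i) = s(i + 1) + s(i)`. -/
def dOp {N : ℕ} (s : ZMod N → ZMod 2) : ZMod N → ZMod 2 :=
  fun i => s (i + 1) + s i

/-- The linear complexity of a binary cyclic sequence: the least `c ≥ 0` with
`(E + 1)^c s = 0`. -/
noncomputable def linComp {N : ℕ} (s : ZMod N → ZMod 2) : ℕ :=
  sInf {c : ℕ | dOp^[c] s = 0}

namespace Cyc
variable {N : ℕ}

lemma z2 (a b : ZMod 2) (h : a + b = 0) : a = b := by revert a b; decide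

lemma z2' (a b c : ZMod 2) : (a + b) + (b + c) = a + c := by revert a b c; decide

lemma dOp_zero : dOp (0 : ZMod N → ZMod 2) = 0 := by
  funext i; simp [dOp]

lemma iterate_dOp_zero (c : ℕ) : dOp^[c] (0 : ZMod N → ZMod 2) = 0 := by
  induction c with
  | zero => rfl
  | succ c ih => rw [Function.iterate_succ_apply, dOp_zero, ih]

lemma dOp_add (s t : ZMod N → ZMod 2) : dOp (s + t) = dOp s + dOp t := by
  funext i; simp [dOp]; ring

lemma iterate_dOp_add (c : ℕ) (s t : ZMod N → ZMod 2) :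
    dOp^[c] (s + t) = dOp^[c] s + dOp^[c] t := by
  induction c with
  | zero => rfl
  | succ c ih => rw [Function.iterate_succ_apply', ih, dOp_add, Function.iterate_succ_apply',
      Function.iterate_succ_apply']

lemma iterate_dOp_mono {c c' : ℕ} (h : c ≤ c') {s : ZMod N → ZMod 2}
    (h0 : dOp^[c] s = 0) : dOp^[c'] s = 0 := by
  obtain ⟨d, rfl⟩ := Nat.exists_eq_add_of_le h
  rw [Nat.add_comm, Function.iterate_add_apply, h0, iterate_dOp_zero]

lemma dOp_pow2 (k : ℕ) (s : ZMod N → ZMod 2) (i : ZMod N) :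
    dOp^[2 ^ k] s i = s (i + (2 ^ k : ℕ)) + s i := by
  induction k generalizing s i with
  | zero => simp [dOp]
  | succ k ih =>
    have h2 : (2:ℕ) ^ (k+1) = 2 ^ k + 2 ^ k := by ring
    rw [h2, Function.iterate_add_apply, ih, ih, ih]
    have : ((2 ^ k + 2 ^ k : ℕ) : ZMod N) = (2 ^ k : ℕ) + (2 ^ k : ℕ) := by push_cast; ring
    rw [this, ← add_assoc i]
    exact z2' _ _ _

lemma dOp_pow2_sub_one (k : ℕ) (s : ZMod N → ZMod 2) (i : ZMod N) :
    dOp^[2 ^ k - 1] s i = ∑ j ∈ Finset.range (2 ^ k), s (i + (j : ℕ)) := by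
  induction k generalizing i with
  | zero => simp
  | succ k ih =>
    have h2 : (2:ℕ) ^ (k+1) - 1 = 2 ^ k + (2 ^ k - 1) := by
      have : (1:ℕ) ≤ 2 ^ k := Nat.one_le_two_pow
      omega
    rw [h2, Function.iterate_add_apply, dOp_pow2, ih, ih]
    have h3 : (2:ℕ) ^ (k+1) = 2 ^ k + 2 ^ k := by ring
    rw [h3, Finset.sum_range_add, add_comm]
    congr 1
    refine Finset.sum_congr rfl fun j _ => ?_
    have : ((2 ^ k + j : ℕ) : ZMod N) = (2 ^ k : ℕ) + (j : ℕ) := by push_cast; ring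
    rw [this, ← add_assoc i]


lemma const_of_dOp_eq_zero [NeZero N] {s : ZMod N → ZMod 2} (h : dOp s = 0) (i : ZMod N) :
    s i = s 0 := by
  have key : ∀ m : ℕ, s (m : ZMod N) = s 0 := by
    intro m
    induction m with
    | zero => norm_num
    | succ m ih =>
      have h1 : s ((m : ZMod N) + 1) + s (m : ZMod N) = 0 := congrFun h m
      have h2 := z2 _ _ h1
      push_cast
      rw [h2, ih]
  have := key i.val
  rwa [ZMod.natCast_zmod_val] at this

lemma eq_zero_of_window [NeZero N] {c : ℕ} {s : ZMod N → ZMod 2}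
    (h0 : dOp^[c] s = 0) (hw : ∀ m < c, s ((m : ℕ) : ZMod N) = 0) : s = 0 := by
  induction c generalizing s with
  | zero => exact h0
  | succ c ih =>
    have ht : dOp s = 0 := by
      refine ih (s := dOp s) ?_ ?_
      · rw [← Function.iterate_succ_apply]; exact h0
      · intro m hm
        show s ((m : ZMod N) + 1) + s (m : ZMod N) = 0
        have e1 : (m : ZMod N) + 1 = ((m + 1 : ℕ) : ZMod N) := by push_cast; ring
        rw [e1, hw _ (by omega), hw _ (by omega), add_zero]
    funext i
    rw [const_of_dOp_eq_zero ht i]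
    have := hw 0 (by omega)
    simpa using this


lemma z3 (a b : ZMod 2) : a + b + a = b := by revert a b; decide
lemma z4 (a b c : ZMod 2) : (a + c) + (b + c) = a + b := by revert a b c; decide
lemma z5 (a b : ZMod 2) : a + (b + a) = b := by revert a b; decide
lemma z6 (a b c : ZMod 2) (h : a + b = c) : a = c + b := by revert a b c; decide
lemma z7 (a b : ZMod 2) : (a + b) + b = a := by revert a b; decide

section PowTwo
variable {L : ℕ}

lemma exists_window {c : ℕ} (hc : c ≤ 2 ^ L) (x : Fin c → ZMod 2) :
    ∃ s : ZMod (2 ^ L) → ZMod 2, dOp^[c] s = 0 ∧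
      ∀ i : Fin c, s ((i : ℕ) : ZMod (2 ^ L)) = x i := by
  haveI : NeZero (2 ^ L) := ⟨(Nat.two_pow_pos L).ne'⟩
  induction c with
  | zero => exact ⟨0, rfl, fun i => absurd i.2 (by omega)⟩
  | succ c ih =>
    obtain ⟨t, ht0, htw⟩ := ih (by omega) (fun i => x i.succ + x i.castSucc)
    have hNt : dOp^[2 ^ L - 1] t = 0 := iterate_dOp_mono (by omega) ht0
    have hsum : ∑ j ∈ Finset.range (2 ^ L), t ((j : ℕ) : ZMod (2 ^ L)) = 0 := by
      have h := dOp_pow2_sub_one L t 0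
      rw [hNt] at h
      simpa using h.symm
    set s₀ : ZMod (2 ^ L) → ZMod 2 :=
      fun i => ∑ j ∈ Finset.range i.val, t ((j : ℕ) : ZMod (2 ^ L)) with hs₀
    have hds₀ : dOp s₀ = t := by
      funext i
      show s₀ (i + 1) + s₀ i = t i
      have hvlt : i.val < 2 ^ L := i.val_lt
      by_cases hv : i.val + 1 < 2 ^ L
      · have e1 : (i + 1).val = i.val + 1 := by
          conv_lhs => rw [← ZMod.natCast_zmod_val i, ← Nat.cast_one, ← Nat.cast_add]
          rw [ZMod.val_cast_of_lt hv]
        have e2 : s₀ (i + 1) = s₀ i + t ((i.val : ℕ) : ZMod (2 ^ L)) := by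
          show (∑ j ∈ Finset.range (i+1).val, t ((j : ℕ) : ZMod (2 ^ L))) = _
          rw [e1, Finset.sum_range_succ]
        rw [e2, ZMod.natCast_zmod_val]
        exact z3 _ _
      · have hNv : i.val + 1 = 2 ^ L := by omega
        have e1 : i + 1 = 0 := by
          conv_lhs => rw [← ZMod.natCast_zmod_val i, ← Nat.cast_one, ← Nat.cast_add]
          rw [hNv, ZMod.natCast_self]
        have e2 : s₀ (i + 1) = 0 := by
          rw [e1]
          show (∑ j ∈ Finset.range (0 : ZMod (2^L)).val, t ((j : ℕ) : ZMod (2 ^ L))) = 0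
          rw [ZMod.val_zero, Finset.sum_range_zero]
        have e3 : s₀ i + t i = 0 := by
          have h4 : ∑ j ∈ Finset.range (i.val + 1), t ((j : ℕ) : ZMod (2 ^ L)) = 0 := by
            rw [hNv]; exact hsum
          rw [Finset.sum_range_succ, ZMod.natCast_zmod_val] at h4
          exact h4
        rw [e2, zero_add]
        exact (z2 _ _ e3)
    set S : ZMod (2 ^ L) → ZMod 2 := fun i => s₀ i + (x 0 + s₀ 0) with hS
    have hdS : dOp S = t := by
      funext i
      show (s₀ (i+1) + (x 0 + s₀ 0)) + (s₀ i + (x 0 + s₀ 0)) = t i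
      rw [z4]
      exact congrFun hds₀ i
    have hwin : ∀ m, (hm : m < c + 1) → S ((m : ℕ) : ZMod (2 ^ L)) = x ⟨m, hm⟩ := by
      intro m
      induction m with
      | zero =>
        intro hm
        have : x ⟨0, hm⟩ = x 0 := by congr
        rw [this]
        simpa using z5 (s₀ 0) (x 0)
      | succ m ihm =>
        intro hm
        have hmc : m < c := by omega
        have hrec : S (((m:ℕ) : ZMod (2^L)) + 1) + S ((m:ℕ) : ZMod (2^L))
            = t ((m:ℕ) : ZMod (2^L)) := congrFun hdS _
        have e0 : ((m + 1 : ℕ) : ZMod (2^L)) = ((m:ℕ) : ZMod (2^L)) + 1 := by push_cast; ring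
        have e1 := z6 _ _ _ hrec
        have e2 : t ((m:ℕ) : ZMod (2^L)) = x ⟨m+1, hm⟩ + x ⟨m, by omega⟩ := by
          have := htw ⟨m, hmc⟩
          simpa using this
        have e3 : S ((m:ℕ) : ZMod (2^L)) = x ⟨m, by omega⟩ := ihm (by omega)
        rw [e0, e1, e2, e3, z7]
    exact ⟨S, by rw [Function.iterate_succ_apply, hdS, ht0], fun i => hwin i.1 i.2⟩


lemma existsUnique_window {c : ℕ} (hc : c ≤ 2 ^ L) (x : Fin c → ZMod 2) :
    ∃! s : ZMod (2 ^ L) → ZMod 2, dOp^[c] s = 0 ∧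
      ∀ i : Fin c, s ((i : ℕ) : ZMod (2 ^ L)) = x i := by
  haveI : NeZero (2 ^ L) := ⟨(Nat.two_pow_pos L).ne'⟩
  obtain ⟨s, h1, h2⟩ := exists_window hc x
  refine ⟨s, ⟨h1, h2⟩, ?_⟩
  rintro s' ⟨h1', h2'⟩
  have hz : s' + s = 0 := by
    refine eq_zero_of_window (c := c) ?_ ?_
    · rw [iterate_dOp_add, h1, h1', add_zero]
    · intro m hm
      show s' ((m : ℕ) : ZMod (2 ^ L)) + s ((m : ℕ) : ZMod (2 ^ L)) = 0
      rw [h2 ⟨m, hm⟩, h2' ⟨m, hm⟩, CharTwo.add_self_eq_zero]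
  funext i
  exact z2 _ _ (congrFun hz i)

lemma dn_one {n : ℕ} {s : ZMod (2 ^ L) → ZMod 2}
    (h1 : dOp^[n + 1] s = 0) (h2 : dOp^[n] s ≠ 0) : dOp^[n] s = fun _ => 1 := by
  haveI : NeZero (2 ^ L) := ⟨(Nat.two_pow_pos L).ne'⟩
  have hd : dOp (dOp^[n] s) = 0 := by
    rw [← Function.iterate_succ_apply' dOp n s]; exact h1
  have hc := const_of_dOp_eq_zero hd
  have h0 : dOp^[n] s 0 ≠ 0 := by
    intro h
    apply h2
    funext i; rw [hc i, h]; rfl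
  have h01 : dOp^[n] s 0 = 1 := by
    revert h0; generalize dOp^[n] s 0 = a; revert a; decide
  funext i; rw [hc i, h01]

lemma existsUnique_T {n : ℕ} (hn1 : n + 1 ≤ 2 ^ L) (x : Fin n → ZMod 2) :
    ∃! s : ZMod (2 ^ L) → ZMod 2, (dOp^[n + 1] s = 0 ∧ dOp^[n] s ≠ 0) ∧
      ∀ i : Fin n, s ((i : ℕ) : ZMod (2 ^ L)) = x i := by
  haveI : NeZero (2 ^ L) := ⟨(Nat.two_pow_pos L).ne'⟩
  obtain ⟨u, ⟨hu0, huw⟩, huniq⟩ := existsUnique_window (L := L) (c := n)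
    (le_trans (Nat.le_succ n) hn1) x
  set x' : Fin (n + 1) → ZMod 2 :=
    Fin.snoc x (u ((n : ℕ) : ZMod (2 ^ L)) + 1) with hx'
  obtain ⟨s, hs0, hsw⟩ := exists_window (c := n + 1) hn1 x'
  have hswx : ∀ i : Fin n, s ((i : ℕ) : ZMod (2 ^ L)) = x i := by
    intro i
    have h := hsw i.castSucc
    rwa [hx', Fin.snoc_castSucc, Fin.coe_castSucc] at h
  have hsn : s ((n : ℕ) : ZMod (2 ^ L)) = u ((n : ℕ) : ZMod (2 ^ L)) + 1 := by
    have h := hsw (Fin.last n)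
    rwa [hx', Fin.snoc_last, Fin.val_last] at h
  have hsne : dOp^[n] s ≠ 0 := by
    intro h0
    have : s = u := huniq s ⟨h0, hswx⟩
    rw [this] at hsn
    exact absurd hsn (by generalize u ((n : ℕ) : ZMod (2 ^ L)) = a; revert a; decide)
  refine ⟨s, ⟨⟨hs0, hsne⟩, hswx⟩, ?_⟩
  rintro s' ⟨⟨h1', h2'⟩, hw'⟩
  have e1 : dOp^[n] s' = fun _ => 1 := dn_one h1' h2'
  have e2 : dOp^[n] s = fun _ => 1 := dn_one hs0 hsne
  have hz : s' + s = 0 := by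
    refine eq_zero_of_window (c := n) ?_ ?_
    · rw [iterate_dOp_add, e1, e2]
      funext i; show (1 : ZMod 2) + 1 = 0; decide
    · intro m hm
      show s' ((m : ℕ) : ZMod (2 ^ L)) + s ((m : ℕ) : ZMod (2 ^ L)) = 0
      rw [hswx ⟨m, hm⟩, hw' ⟨m, hm⟩, CharTwo.add_self_eq_zero]
  funext i
  exact z2 _ _ (congrFun hz i)

end PowTwo

section Shift
variable {N : ℕ}

def shf (j : ZMod N) (s : ZMod N → ZMod 2) : ZMod N → ZMod 2 := fun i => s (i + j)

lemma dOp_shf (j : ZMod N) (s : ZMod N → ZMod 2) : dOp (shf j s) = shf j (dOp s) := by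
  funext i
  show s (i + 1 + j) + s (i + j) = s (i + j + 1) + s (i + j)
  rw [add_right_comm]

lemma iterate_dOp_shf (c : ℕ) (j : ZMod N) (s : ZMod N → ZMod 2) :
    dOp^[c] (shf j s) = shf j (dOp^[c] s) := by
  induction c with
  | zero => rfl
  | succ c ih => rw [Function.iterate_succ_apply', ih, dOp_shf, Function.iterate_succ_apply']

lemma shf_ne_zero (j : ZMod N) {s : ZMod N → ZMod 2} (h : s ≠ 0) : shf j s ≠ 0 := by
  intro h0
  apply h
  funext i
  have := congrFun h0 (i - j)
  simpa [shf] using this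

lemma shf_shf (j j' : ZMod N) (s : ZMod N → ZMod 2) :
    shf j' (shf j s) = shf (j + j') s := by
  funext i
  show s (i + j' + j) = s (i + (j + j'))
  rw [add_assoc, add_comm j' j]

end Shift

section Period
variable {L n : ℕ}

lemma period_lemma (hL : 1 ≤ L) (hln : 2 ^ (L - 1) ≤ n)
    {s : ZMod (2 ^ L) → ZMod 2} (hs : dOp^[n] s ≠ 0)
    {p : ℕ} (hp : 0 < p) (hpN : p < 2 ^ L) :
    ∃ i : ZMod (2 ^ L), s (i + (p : ZMod (2 ^ L))) ≠ s i := by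
  haveI : NeZero (2 ^ L) := ⟨(Nat.two_pow_pos L).ne'⟩
  by_contra hcon
  push_neg at hcon
  apply hs
  have hN : (0:ℕ) < 2 ^ L := Nat.two_pow_pos L
  set g := Nat.gcd p (2 ^ L) with hg
  obtain ⟨k, hkL, hgk⟩ := (Nat.dvd_prime_pow Nat.prime_two).mp (Nat.gcd_dvd_right p (2 ^ L))
  have hgp : g ∣ p := Nat.gcd_dvd_left p (2 ^ L)
  have hglt : g < 2 ^ L := lt_of_le_of_lt (Nat.le_of_dvd hp hgp) hpN
  have hkL' : k ≤ L - 1 := by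
    by_contra hk
    have : k = L := by omega
    rw [this] at hgk
    omega
  -- multiples of p give g
  have hper : ∀ m : ℕ, ∀ i : ZMod (2 ^ L), s (i + ((m * p : ℕ) : ZMod (2 ^ L))) = s i := by
    intro m
    induction m with
    | zero => intro i; simp
    | succ m ih =>
      intro i
      have e : ((m + 1) * p : ℕ) = m * p + p := by ring
      rw [e, Nat.cast_add, ← add_assoc, hcon, ih]
  -- find m with m * p ≡ g mod N
  set a : ZMod (2 ^ L) := ((Nat.gcdA p (2 ^ L) : ℤ) : ZMod (2 ^ L)) with ha
  have hbez : (g : ZMod (2 ^ L)) = (p : ZMod (2 ^ L)) * a := by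
    have h := Nat.gcd_eq_gcd_ab p (2 ^ L)
    have h2 : ((g : ℤ) : ZMod (2 ^ L)) =
        ((p * Nat.gcdA p (2 ^ L) + (2 ^ L : ℕ) * Nat.gcdB p (2 ^ L) : ℤ) : ZMod (2 ^ L)) := by
      rw [← h]
    push_cast at h2
    have hz : ((2 : ZMod (2 ^ L)))^L = 0 := by
      rw [show ((2 : ZMod (2 ^ L)))^L = (((2 ^ L : ℕ) : ZMod (2 ^ L))) by push_cast; ring,
        ZMod.natCast_self]
    rw [hz, zero_mul, add_zero] at h2
    simpa [ha] using h2
  have hgper : ∀ i : ZMod (2 ^ L), s (i + (g : ZMod (2 ^ L))) = s i := by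
    intro i
    have h3 := hper (a.val) i
    rw [show (((a.val * p : ℕ)) : ZMod (2 ^ L)) = (g : ZMod (2 ^ L)) by
      push_cast
      rw [ZMod.natCast_zmod_val, mul_comm, ← hbez]] at h3
    exact h3
  have hd2k : dOp^[2 ^ k] s = 0 := by
    funext i
    rw [dOp_pow2]
    show s (i + ((2 ^ k : ℕ) : ZMod (2 ^ L))) + s i = 0
    rw [← hgk, ← hg, hgper, CharTwo.add_self_eq_zero]
  refine iterate_dOp_mono ?_ hd2k
  calc 2 ^ k ≤ 2 ^ (L - 1) := Nat.pow_le_pow_right (by norm_num) hkL'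
    _ ≤ n := hln

end Period

section Orbits
variable {N : ℕ}

def orb (s : ZMod N → ZMod 2) : Set (ZMod N → ZMod 2) :=
  {t | ∃ j : ZMod N, ∀ i, t i = s (i + j)}

lemma mem_orb_iff {s t : ZMod N → ZMod 2} : t ∈ orb s ↔ ∃ j, t = shf j s := by
  simp only [orb, Set.mem_setOf_eq, shf, funext_iff]

lemma orb_self (s : ZMod N → ZMod 2) : s ∈ orb s :=
  ⟨0, fun i => by rw [add_zero]⟩

lemma orb_eq_of_mem {s t : ZMod N → ZMod 2} (h : t ∈ orb s) : orb t = orb s := by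
  obtain ⟨j, rfl⟩ := mem_orb_iff.mp h
  ext u
  rw [mem_orb_iff, mem_orb_iff]
  constructor
  · rintro ⟨j', rfl⟩
    exact ⟨j + j', (shf_shf j j' s).symm ▸ rfl⟩
  · rintro ⟨j'', rfl⟩
    refine ⟨j'' - j, ?_⟩
    rw [shf_shf, add_sub_cancel]

end Orbits

lemma shf_inj {L n : ℕ} (hL : 1 ≤ L) (hln : 2 ^ (L - 1) ≤ n)
    {s : ZMod (2 ^ L) → ZMod 2} (hs : dOp^[n] s ≠ 0)
    {j j' : ZMod (2 ^ L)} (h : shf j s = shf j' s) : j = j' := by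
  haveI : NeZero (2 ^ L) := ⟨(Nat.two_pow_pos L).ne'⟩
  by_contra hne
  have hp0 : (j - j').val ≠ 0 := by
    intro h0
    exact hne (sub_eq_zero.mp ((ZMod.val_eq_zero _).mp h0))
  obtain ⟨i, hi⟩ := period_lemma hL hln hs (Nat.pos_of_ne_zero hp0) ((j - j').val_lt)
  apply hi
  rw [ZMod.natCast_zmod_val]
  have hh : ∀ i', s (i' + j) = s (i' + j') := fun i' => congrFun h i'
  have e : i + (j - j') = (i - j') + j := by ring
  rw [e, hh, sub_add_cancel]

end Cyc

open Cyc

theorem stmt_1 (n : ℕ) (hn : 1 ≤ n) :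
    letI L := Nat.log 2 n + 1
    letI T : Set (ZMod (2 ^ L) → ZMod 2) :=
      {s | dOp^[n + 1] s = 0 ∧ dOp^[n] s ≠ 0}
    letI orbits : Set (Set (ZMod (2 ^ L) → ZMod 2)) :=
      {O | ∃ s ∈ T, O = {t | ∃ j : ZMod (2 ^ L), ∀ i, t i = s (i + j)}}
    (∀ s ∈ T, linComp s = n + 1) ∧
    (∀ s ∈ T, ∀ p : ℕ, 0 < p → p < 2 ^ L →
        ∃ i : ZMod (2 ^ L), s (i + (p : ZMod (2 ^ L))) ≠ s i) ∧
    T.ncard = 2 ^ n ∧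
    orbits.ncard = 2 ^ (n - Nat.log 2 n - 1) ∧
    (∀ O ∈ orbits, O ⊆ T ∧ O.ncard = 2 ^ L) ∧
    (∀ x : Fin n → ZMod 2, ∃! s : ZMod (2 ^ L) → ZMod 2,
        s ∈ T ∧ ∀ i : Fin n, s ((i : ℕ) : ZMod (2 ^ L)) = x i) := by
  set L := Nat.log 2 n + 1 with hLdef
  set T : Set (ZMod (2 ^ L) → ZMod 2) :=
    {s | dOp^[n + 1] s = 0 ∧ dOp^[n] s ≠ 0} with hTdef
  set orbits : Set (Set (ZMod (2 ^ L) → ZMod 2)) :=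
    {O | ∃ s ∈ T, O = {t | ∃ j : ZMod (2 ^ L), ∀ i, t i = s (i + j)}} with horbitsdef
  haveI : NeZero (2 ^ L) := ⟨(Nat.two_pow_pos L).ne'⟩
  have hL1 : 1 ≤ L := by omega
  have hlow : 2 ^ (L - 1) ≤ n := by
    simpa [hLdef] using Nat.pow_log_le_self 2 (by omega : n ≠ 0)
  have hhigh : n < 2 ^ L := Nat.lt_pow_succ_log_self (by norm_num) n
  have hn1 : n + 1 ≤ 2 ^ L := hhigh
  have hLn : L ≤ n := Nat.log_lt_self 2 (by omega : n ≠ 0)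
  -- the window bijection for T
  have hexT : ∀ x : Fin n → ZMod 2, ∃! s : ZMod (2 ^ L) → ZMod 2,
      (dOp^[n + 1] s = 0 ∧ dOp^[n] s ≠ 0) ∧
        ∀ i : Fin n, s ((i : ℕ) : ZMod (2 ^ L)) = x i :=
    fun x => existsUnique_T hn1 x
  have hTmem : ∀ s : ZMod (2 ^ L) → ZMod 2,
      s ∈ T ↔ dOp^[n + 1] s = 0 ∧ dOp^[n] s ≠ 0 := fun s => Iff.rfl
  -- part 3 computation (needed also for part 4)
  have hcardT : Nat.card T = 2 ^ n := by
    set W : T → (Fin n → ZMod 2) := fun s i => s.1 ((i : ℕ) : ZMod (2 ^ L)) with hW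
    have hbij : Function.Bijective W := by
      constructor
      · rintro ⟨s₁, hs₁⟩ ⟨s₂, hs₂⟩ h
        obtain ⟨u, -, hu⟩ := hexT (fun i => s₁ ((i : ℕ) : ZMod (2 ^ L)))
        have e1 := hu s₁ ⟨hs₁, fun i => rfl⟩
        have e2 := hu s₂ ⟨hs₂, fun i => (congrFun h i).symm⟩
        exact Subtype.ext (e1.trans e2.symm)
      · intro x
        obtain ⟨s, ⟨hsT, hsw⟩, -⟩ := hexT x
        exact ⟨⟨s, hsT⟩, funext hsw⟩
    rw [Nat.card_congr (Equiv.ofBijective W hbij), Nat.card_fun, Nat.card_zmod,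
      Nat.card_eq_fintype_card, Fintype.card_fin]
  -- orbit basics
  have horb : ∀ s : ZMod (2 ^ L) → ZMod 2,
      {t | ∃ j : ZMod (2 ^ L), ∀ i, t i = s (i + j)} = orb s := fun s => rfl
  have horbsub : ∀ O ∈ orbits, O ⊆ T := by
    rintro O ⟨s, hsT, rfl⟩ t ht
    obtain ⟨j, rfl⟩ := mem_orb_iff.mp ht
    refine ⟨?_, ?_⟩
    · rw [iterate_dOp_shf, hsT.1]; rfl
    · rw [iterate_dOp_shf]; exact shf_ne_zero j hsT.2
  have horbcard : ∀ O ∈ orbits, Nat.card O = 2 ^ L := by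
    rintro O ⟨s, hsT, rfl⟩
    show Nat.card (orb s) = 2 ^ L
    set f : ZMod (2 ^ L) → (orb s : Set _) :=
      fun j => ⟨shf j s, mem_orb_iff.mpr ⟨j, rfl⟩⟩ with hf
    have hbij : Function.Bijective f := by
      constructor
      · intro j j' h
        exact shf_inj hL1 hlow hsT.2 (congrArg Subtype.val h)
      · rintro ⟨t, ht⟩
        obtain ⟨j, rfl⟩ := mem_orb_iff.mp ht
        exact ⟨j, rfl⟩
    rw [← Nat.card_congr (Equiv.ofBijective f hbij), Nat.card_zmod]
  refine ⟨?_, ?_, ?_, ?_, ?_, ?_⟩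
  · -- linear complexity
    rintro s ⟨h1, h2⟩
    have hub : linComp s ≤ n + 1 :=
      Nat.sInf_le (show (n + 1) ∈ {c : ℕ | dOp^[c] s = 0} from h1)
    have hmem : dOp^[linComp s] s = 0 :=
      Nat.sInf_mem (⟨n + 1, h1⟩ : Set.Nonempty {c : ℕ | dOp^[c] s = 0})
    by_contra hne
    have hlt : linComp s ≤ n := by omega
    exact h2 (iterate_dOp_mono hlt hmem)
  · -- least period
    rintro s ⟨h1, h2⟩ p hp hpN
    exact period_lemma hL1 hlow h2 hp hpN
  · rw [← Nat.card_coe_set_eq]; exact hcardT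
  · -- number of orbits
    rw [← Nat.card_coe_set_eq]
    set rep : orbits → (ZMod (2 ^ L) → ZMod 2) := fun O => Classical.choose O.2 with hrep
    have hrepspec : ∀ O : orbits, rep O ∈ T ∧ (O : Set _) = orb (rep O) := by
      intro O
      obtain ⟨h1, h2⟩ := Classical.choose_spec O.2
      exact ⟨h1, h2⟩
    set G : orbits × ZMod (2 ^ L) → T :=
      fun P => ⟨shf P.2 (rep P.1), horbsub _ P.1.2 (by
        rw [(hrepspec P.1).2]
        exact mem_orb_iff.mpr ⟨P.2, rfl⟩)⟩ with hG
    have hbij : Function.Bijective G := by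
      constructor
      · rintro ⟨O, j⟩ ⟨O', j'⟩ h
        have hval : shf j (rep O) = shf j' (rep O') := congrArg Subtype.val h
        have hOO' : O = O' := by
          apply Subtype.ext
          rw [(hrepspec O).2, (hrepspec O').2]
          rw [← orb_eq_of_mem (mem_orb_iff.mpr ⟨j, rfl⟩ : shf j (rep O) ∈ orb (rep O)),
            hval, orb_eq_of_mem (mem_orb_iff.mpr ⟨j', rfl⟩ : shf j' (rep O') ∈ orb (rep O'))]
        subst hOO'
        have hj : j = j' := shf_inj hL1 hlow ((hrepspec O).1).2 hval
        rw [hj]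
      · rintro ⟨t, htT⟩
        have hOmem : orb t ∈ orbits := ⟨t, htT, rfl⟩
        have hmem : t ∈ orb (rep ⟨orb t, hOmem⟩) := by
          rw [← (hrepspec ⟨orb t, hOmem⟩).2]
          exact orb_self t
        obtain ⟨j, hj⟩ := mem_orb_iff.mp hmem
        exact ⟨⟨⟨orb t, hOmem⟩, j⟩, Subtype.ext hj.symm⟩
    have hcards : Nat.card orbits * 2 ^ L = 2 ^ n := by
      have h1 : Nat.card (orbits × ZMod (2 ^ L)) = Nat.card T :=
        Nat.card_congr (Equiv.ofBijective G hbij)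
      rw [Nat.card_prod, Nat.card_zmod] at h1
      rw [h1, hcardT]
    have heq : n - Nat.log 2 n - 1 = n - L := by omega
    rw [heq]
    have hpow : 2 ^ (n - L) * 2 ^ L = 2 ^ n := by
      rw [← pow_add, Nat.sub_add_cancel hLn]
    refine Nat.eq_of_mul_eq_mul_right (m := 2 ^ L) (Nat.two_pow_pos L) ?_
    rw [hcards, hpow]
  · -- orbits are subsets of T of size 2^L
    intro O hO
    refine ⟨horbsub O hO, ?_⟩
    rw [← Nat.card_coe_set_eq]
    exact horbcard O hO
  · -- windows
    intro x
    exact hexT x
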